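/- Let μ₁ be a probability measure on a Euclidean space X satisfying LSI(ρ₁), and let δψ : X → ℝ be bounded measurable. Define μ₂(dx) = Z^{-1} exp(−δψ(x)) μ₁(dx). Then μ₂ satisfies LSI(ρ₂) with ρ₂ = ρ₁ exp(−osc δψ), where osc δψ = sup δψ − inf δψ. -/

import Mathlib

open MeasureTheory

/-- The entropy functional. -/
noncomputable def Ent {α : Type*} [MeasurableSpace α] (ν : Measure α) (g : α → ℝ) : ℝ :=
  ∫ x, g x * Real.log (g x) ∂ν - (∫ x, g x ∂ν) * Real.log (∫ x, g x ∂ν)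

/-- The logarithmic Sobolev inequality with constant `ρ` on a Euclidean space. -/
def LSI {E : Type*} [NormedAddCommGroup E] [InnerProductSpace ℝ E] [CompleteSpace E]
    [MeasurableSpace E] (ν : Measure E) (ρ : ℝ) : Prop :=
  ∀ f : E → ℝ, (∀ x, 0 ≤ f x) → LocallyLipschitz f → Integrable f ν →
    Ent ν f ≤ (1 / (2 * ρ)) * ∫ x, ‖gradient f x‖ ^ 2 / f x ∂ν

lemma hs_phi_nonneg {a b : ℝ} (ha : 0 ≤ a) (hb : 0 < b) :
    0 ≤ a * Real.log a - a * Real.log b - a + b := by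
  rcases ha.eq_or_lt with h | h
  · simp [← h]; linarith
  · have h1 : Real.log b - Real.log a ≤ b / a - 1 := by
      have := Real.log_le_sub_one_of_pos (div_pos hb h)
      rwa [Real.log_div hb.ne' h.ne'] at this
    have h2 : a * (Real.log b - Real.log a) ≤ a * (b / a - 1) :=
      mul_le_mul_of_nonneg_left h1 h.le
    have h3 : a * (b / a - 1) = b - a := by field_simp
    nlinarith

lemma hs_gradient_const_mul {X : Type*} [NormedAddCommGroup X] [InnerProductSpace ℝ X]
    [CompleteSpace X] {c : ℝ} (hc : c ≠ 0) (f : X → ℝ) (x : X) :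
    gradient (fun y => c * f y) x = c • gradient f x := by
  by_cases hx : DifferentiableAt ℝ f x
  · show (InnerProductSpace.toDual ℝ X).symm (fderiv ℝ (fun y => c * f y) x)
      = c • (InnerProductSpace.toDual ℝ X).symm (fderiv ℝ f x)
    rw [fderiv_const_mul hx c, _root_.map_smul]
  · have hx2 : ¬ DifferentiableAt ℝ (fun y => c * f y) x := by
      intro h
      have := h.const_mul c⁻¹
      simp only [← mul_assoc, inv_mul_cancel₀ hc, one_mul] at this
      exact hx this
    show (InnerProductSpace.toDual ℝ X).symm (fderiv ℝ (fun y => c * f y) x)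
      = c • (InnerProductSpace.toDual ℝ X).symm (fderiv ℝ f x)
    rw [fderiv_zero_of_not_differentiableAt hx, fderiv_zero_of_not_differentiableAt hx2]
    simp

theorem holley_stroock {X : Type*} [NormedAddCommGroup X] [InnerProductSpace ℝ X]
    [CompleteSpace X] [MeasurableSpace X] [BorelSpace X]
    (μ₁ : Measure X) [IsProbabilityMeasure μ₁] (ρ₁ : ℝ) (hρ₁ : 0 < ρ₁)
    (h1 : LSI μ₁ ρ₁) (δψ : X → ℝ) (hmeas : Measurable δψ)
    (hba : BddAbove (Set.range δψ)) (hbb : BddBelow (Set.range δψ))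
    (Z : ℝ) (hZ : Z = ∫ x, Real.exp (-δψ x) ∂μ₁)
    (μ₂ : Measure X)
    (hμ₂ : μ₂ = μ₁.withDensity fun x => ENNReal.ofReal (Real.exp (-δψ x) / Z)) :
    LSI μ₂ (ρ₁ * Real.exp (-(sSup (Set.range δψ) - sInf (Set.range δψ)))) := by
  have hne : Nonempty X := by
    by_contra h
    have : μ₁ Set.univ = 0 := by
      rw [Set.univ_eq_empty_iff.mpr (not_nonempty_iff.mp h)]; simp
    simpa [this] using (measure_univ (μ := μ₁))
  obtain ⟨x₀⟩ := hne
  set Mv := sSup (Set.range δψ) with hMv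
  set mv := sInf (Set.range δψ) with hmv
  have hleM : ∀ x, δψ x ≤ Mv := fun x => le_csSup hba ⟨x, rfl⟩
  have hlem : ∀ x, mv ≤ δψ x := fun x => csInf_le hbb ⟨x, rfl⟩
  have hmM : mv ≤ Mv := (hlem x₀).trans (hleM x₀)
  -- Z positive
  have hint_exp : Integrable (fun x => Real.exp (-δψ x)) μ₁ := by
    refine (integrable_const (Real.exp (-mv))).mono'
      (hmeas.neg.exp).aestronglyMeasurable ?_
    filter_upwards with x
    rw [Real.norm_of_nonneg (Real.exp_pos _).le]
    exact Real.exp_le_exp.mpr (by linarith [hlem x])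
  have hZpos : 0 < Z := by
    rw [hZ]
    have : (0:ℝ) < Real.exp (-Mv) := Real.exp_pos _
    calc (0:ℝ) < Real.exp (-Mv) := this
      _ = ∫ _x, Real.exp (-Mv) ∂μ₁ := by simp
      _ ≤ ∫ x, Real.exp (-δψ x) ∂μ₁ := by
          refine integral_mono (integrable_const _) hint_exp fun x => ?_
          exact Real.exp_le_exp.mpr (by linarith [hleM x])
  -- density setup
  set r : X → ℝ := fun x => Real.exp (-δψ x) / Z with hr
  have hrmeas : Measurable r := (hmeas.neg.exp).div_const Z
  have hrpos : ∀ x, 0 < r x := fun x => div_pos (Real.exp_pos _) hZpos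
  set c₁ : ℝ := Real.exp (-Mv) / Z with hc₁
  set c₂ : ℝ := Real.exp (-mv) / Z with hc₂
  have hc₁pos : 0 < c₁ := div_pos (Real.exp_pos _) hZpos
  have hc₂pos : 0 < c₂ := div_pos (Real.exp_pos _) hZpos
  have hrleC : ∀ x, r x ≤ c₂ := fun x =>
    div_le_div_of_nonneg_right (Real.exp_le_exp.mpr (by linarith [hlem x])) hZpos.le
  have hCler : ∀ x, c₁ ≤ r x := fun x =>
    div_le_div_of_nonneg_right (Real.exp_le_exp.mpr (by linarith [hleM x])) hZpos.le
  set d : X → NNReal := fun x => (r x).toNNReal with hd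
  have hdmeas : Measurable d := hrmeas.real_toNNReal
  have hμ₂d : μ₂ = μ₁.withDensity (fun x => ((d x : NNReal) : ENNReal)) := by
    rw [hμ₂]; rfl
  have hdcoe : ∀ x, ((d x : NNReal) : ℝ) = r x := fun x => Real.coe_toNNReal _ (hrpos x).le
  -- transfer of integrals
  have key : ∀ g : X → ℝ, ∫ x, g x ∂μ₂ = ∫ x, r x * g x ∂μ₁ := by
    intro g
    rw [hμ₂d, integral_withDensity_eq_integral_smul hdmeas]
    congr 1; funext x
    simp only [NNReal.smul_def, smul_eq_mul, hdcoe]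
  have keyInt' : ∀ g : X → ℝ, Integrable g μ₂ ↔ Integrable (fun x => r x * g x) μ₁ := by
    intro g
    rw [hμ₂d, integrable_withDensity_iff_integrable_smul hdmeas]
    constructor
    · intro h; refine h.congr (Filter.Eventually.of_forall fun x => ?_)
      simp only [NNReal.smul_def, smul_eq_mul, hdcoe]
    · intro h; refine h.congr (Filter.Eventually.of_forall fun x => ?_)
      simp only [NNReal.smul_def, smul_eq_mul, hdcoe]
  have keyInt : ∀ g : X → ℝ, Measurable g → (Integrable g μ₂ ↔ Integrable g μ₁) := by
    intro g hg
    rw [keyInt' g]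
    constructor
    · intro h
      refine ((h.norm.const_mul (1/c₁)).mono' hg.aestronglyMeasurable ?_)
      filter_upwards with x
      have h1 : ‖r x * g x‖ = r x * ‖g x‖ := by
        rw [norm_mul, Real.norm_of_nonneg (hrpos x).le]
      have h2 : c₁ * ‖g x‖ ≤ r x * ‖g x‖ :=
        mul_le_mul_of_nonneg_right (hCler x) (norm_nonneg _)
      have h3 : ‖g x‖ = (1/c₁) * (c₁ * ‖g x‖) := by field_simp
      calc ‖g x‖ = (1/c₁) * (c₁ * ‖g x‖) := h3
        _ ≤ (1/c₁) * ‖r x * g x‖ := by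
            apply mul_le_mul_of_nonneg_left _ (by positivity)
            rw [h1]; exact h2
    · intro h
      refine ((h.norm.const_mul c₂).mono' (hrmeas.mul hg).aestronglyMeasurable ?_)
      filter_upwards with x
      rw [norm_mul, Real.norm_of_nonneg (hrpos x).le]
      exact mul_le_mul_of_nonneg_right (hrleC x) (norm_nonneg _)
  have keyMono : ∀ g : X → ℝ, (∀ x, 0 ≤ g x) → Integrable g μ₁ → Integrable g μ₂ →
      c₁ * ∫ x, g x ∂μ₁ ≤ ∫ x, g x ∂μ₂ ∧ ∫ x, g x ∂μ₂ ≤ c₂ * ∫ x, g x ∂μ₁ := by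
    intro g hg hint₁ hint₂
    have hrg : Integrable (fun x => r x * g x) μ₁ := (keyInt' g).mp hint₂
    rw [key g]
    constructor
    · rw [← integral_const_mul]
      exact integral_mono (hint₁.const_mul c₁) hrg fun x =>
        mul_le_mul_of_nonneg_right (hCler x) (hg x)
    · rw [← integral_const_mul]
      exact integral_mono hrg (hint₁.const_mul c₂) fun x =>
        mul_le_mul_of_nonneg_right (hrleC x) (hg x)
  -- μ₂ is a probability measure
  have hrint : Integrable r μ₁ := hint_exp.div_const Z
  haveI hprob₂ : IsProbabilityMeasure μ₂ := by
    constructor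
    rw [hμ₂d, withDensity_apply _ MeasurableSet.univ, Measure.restrict_univ]
    rw [lintegral_coe_eq_integral d
      (hrint.congr (Filter.Eventually.of_forall fun x => (hdcoe x).symm))]
    have hone : ∫ x, ((d x : NNReal) : ℝ) ∂μ₁ = 1 := by
      rw [integral_congr_ae (Filter.Eventually.of_forall hdcoe), hr]
      rw [integral_div, ← hZ, div_self hZpos.ne']
    rw [hone]; simp
  -- now the LSI proof
  intro f hf hlip hfint₂
  have hfmeas : Measurable f := hlip.continuous.measurable
  set L : X → ℝ := fun x => f x * Real.log (f x) with hL
  have hLmeas : Measurable L := hfmeas.mul (Real.measurable_log.comp hfmeas)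
  have hgradmeas : Measurable (gradient f) := by
    have hmf := measurable_fderiv ℝ f
    exact ((InnerProductSpace.toDual ℝ X).symm.continuous.measurable).comp hmf
  set G : X → ℝ := fun x => ‖gradient f x‖ ^ 2 / f x with hG
  have hGmeas : Measurable G := (hgradmeas.norm.pow_const 2).div hfmeas
  have hGnn : ∀ x, 0 ≤ G x := fun x => div_nonneg (by positivity) (hf x)
  have hgoal₂ : ∫ x, ‖gradient f x‖ ^ 2 / f x ∂μ₂ = ∫ x, G x ∂μ₂ := rfl
  have hgoal₁ : ∫ x, ‖gradient f x‖ ^ 2 / f x ∂μ₁ = ∫ x, G x ∂μ₁ := rfl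
  rw [hgoal₂]
  have hfint₁ : Integrable f μ₁ := (keyInt f hfmeas).mp hfint₂
  set t₁ : ℝ := ∫ x, f x ∂μ₁ with ht₁
  set t₂ : ℝ := ∫ x, f x ∂μ₂ with ht₂
  have ht₁nn : 0 ≤ t₁ := integral_nonneg hf
  have ht₂nn : 0 ≤ t₂ := integral_nonneg hf
  have hI₂nn : 0 ≤ ∫ x, G x ∂μ₂ := integral_nonneg hGnn
  have hconst_nn : 0 ≤ 1 / (2 * (ρ₁ * Real.exp (-(Mv - mv)))) := by positivity
  by_cases ht₁0 : t₁ = 0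
  · -- degenerate case : f = 0 a.e.
    have hf0 : f =ᵐ[μ₁] 0 := (integral_eq_zero_iff_of_nonneg hf hfint₁).mp ht₁0
    have hac : μ₂ ≪ μ₁ := by rw [hμ₂d]; exact withDensity_absolutelyContinuous _ _
    have hf0' : f =ᵐ[μ₂] 0 := hac.ae_le hf0
    have e1 : ∫ x, L x ∂μ₂ = 0 := by
      have hL0 : L =ᵐ[μ₂] 0 := hf0'.mono fun x hx => by
        simp only [Pi.zero_apply] at hx ⊢; simp [hL, hx]
      rw [integral_congr_ae hL0]; simp
    have e2 : t₂ = 0 := by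
      rw [ht₂, integral_congr_ae hf0']; simp
    have hEnt : Ent μ₂ f = 0 := by
      rw [Ent]
      rw [show ∫ x, f x * Real.log (f x) ∂μ₂ = 0 from e1, ← ht₂, e2]
      simp
    rw [hEnt]
    exact mul_nonneg hconst_nn hI₂nn
  have ht₁pos : 0 < t₁ := lt_of_le_of_ne ht₁nn (Ne.symm ht₁0)
  -- scaling machinery
  have hscale : ∀ c : ℝ, 0 < c →
      Ent μ₁ (fun x => c * f x) ≤ (1/(2*ρ₁)) * (c * ∫ x, G x ∂μ₁) := by
    intro c hc
    have hlip' : LocallyLipschitz (fun x => c * f x) := by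
      have h := ((lipschitzWith_smul (β := ℝ) c).locallyLipschitz).comp hlip
      exact h
    have happ := h1 (fun x => c * f x) (fun x => mul_nonneg hc.le (hf x)) hlip'
      (hfint₁.const_mul c)
    have hint_eq : ∫ x, ‖gradient (fun y => c * f y) x‖ ^ 2 / (c * f x) ∂μ₁
        = c * ∫ x, G x ∂μ₁ := by
      rw [← integral_const_mul]
      congr 1; funext x
      rw [hs_gradient_const_mul hc.ne' f x]
      by_cases hfx : f x = 0
      · simp [hG, hfx]
      · rw [norm_smul]
        simp only [hG, Real.norm_eq_abs, abs_of_pos hc]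
        rw [mul_pow]
        field_simp
    rw [hint_eq] at happ
    exact happ
  have hptc : ∀ c : ℝ, 0 < c →
      (fun x => (c * f x) * Real.log (c * f x)) = fun x => c * L x + (c * Real.log c) * f x := by
    intro c hc
    funext x
    by_cases hfx : f x = 0
    · simp [hL, hfx]
    · rw [Real.log_mul hc.ne' hfx]
      simp only [hL]; ring
  have hcf_int : ∀ c : ℝ, ∫ x, c * f x ∂μ₁ = c * t₁ := fun c => integral_const_mul c f
  have hent_scale_non : ¬ Integrable L μ₁ → ∀ c : ℝ, 0 < c →
      Ent μ₁ (fun x => c * f x) = -((c * t₁) * Real.log (c * t₁)) := by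
    intro hLint c hc
    rw [Ent, hcf_int c]
    have hnint : ¬ Integrable (fun x => (c * f x) * Real.log (c * f x)) μ₁ := by
      rw [hptc c hc]
      intro h
      apply hLint
      have h2 := (h.sub (hfint₁.const_mul (c * Real.log c))).const_mul (1/c)
      refine h2.congr (Filter.Eventually.of_forall fun x => ?_)
      simp only [Pi.sub_apply]
      rw [add_sub_cancel_right, ← mul_assoc, one_div_mul_cancel hc.ne', one_mul]
    rw [integral_undef hnint]
    ring
  -- the main chain : Ent μ₂ f ≤ c₂ * Ent μ₁ f when L is integrable
  have chain : Integrable L μ₁ → Ent μ₂ f ≤ c₂ * Ent μ₁ f := by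
    intro hLint
    have hLint₂ : Integrable L μ₂ := (keyInt L hLmeas).mpr hLint
    set φ : X → ℝ := fun x => L x - f x * Real.log t₁ - f x + t₁ with hφ
    have hφnn : ∀ x, 0 ≤ φ x := fun x => hs_phi_nonneg (hf x) ht₁pos
    have iA₁ : Integrable (fun x => L x - f x * Real.log t₁) μ₁ := hLint.sub (hfint₁.mul_const _)
    have iB₁ : Integrable (fun x => L x - f x * Real.log t₁ - f x) μ₁ := iA₁.sub hfint₁
    have iA₂ : Integrable (fun x => L x - f x * Real.log t₁) μ₂ := hLint₂.sub (hfint₂.mul_const _)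
    have iB₂ : Integrable (fun x => L x - f x * Real.log t₁ - f x) μ₂ := iA₂.sub hfint₂
    have hφint₁ : Integrable φ μ₁ := iB₁.add (integrable_const _)
    have hφint₂ : Integrable φ μ₂ := iB₂.add (integrable_const _)
    have e₁ : ∫ x, φ x ∂μ₁ = Ent μ₁ f := by
      rw [Ent]
      simp only [hφ]
      rw [integral_add iB₁ (integrable_const _), integral_sub iA₁ hfint₁,
        integral_sub hLint (hfint₁.mul_const _), integral_mul_const, integral_const]
      simp only [measure_univ, probReal_univ, ENNReal.toReal_one, smul_eq_mul, one_mul]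
      rw [← ht₁]
      ring
    have e₂ : ∫ x, φ x ∂μ₂ = (∫ x, L x ∂μ₂) - t₂ * Real.log t₁ - t₂ + t₁ := by
      simp only [hφ]
      rw [integral_add iB₂ (integrable_const _), integral_sub iA₂ hfint₂,
        integral_sub hLint₂ (hfint₂.mul_const _), integral_mul_const, integral_const]
      simp only [measure_univ, probReal_univ, ENNReal.toReal_one, smul_eq_mul, one_mul]
      rfl
    have e₃ : Ent μ₂ f ≤ ∫ x, φ x ∂μ₂ := by
      rw [Ent, e₂, ← ht₂]
      have := hs_phi_nonneg ht₂nn ht₁pos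
      linarith
    have e₄ : ∫ x, φ x ∂μ₂ ≤ c₂ * ∫ x, φ x ∂μ₁ := (keyMono φ hφnn hφint₁ hφint₂).2
    calc Ent μ₂ f ≤ ∫ x, φ x ∂μ₂ := e₃
      _ ≤ c₂ * ∫ x, φ x ∂μ₁ := e₄
      _ = c₂ * Ent μ₁ f := by rw [e₁]
  -- constant identity
  have hcc : c₂ * (1/(2*ρ₁)) * (1/c₁) = 1 / (2 * (ρ₁ * Real.exp (-(Mv - mv)))) := by
    rw [hc₁, hc₂, Real.exp_neg (Mv - mv), Real.exp_sub, Real.exp_neg Mv, Real.exp_neg mv]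
    have e1 := (Real.exp_pos Mv).ne'
    have e2 := (Real.exp_pos mv).ne'
    field_simp
  by_cases hGint : Integrable G μ₁
  · -- Fisher information finite
    have hGint₂ : Integrable G μ₂ := (keyInt G hGmeas).mpr hGint
    have hI₁nn : 0 ≤ ∫ x, G x ∂μ₁ := integral_nonneg hGnn
    have hI₁le : c₁ * ∫ x, G x ∂μ₁ ≤ ∫ x, G x ∂μ₂ := (keyMono G hGnn hGint hGint₂).1
    by_cases hLint : Integrable L μ₁
    · have e₄ : Ent μ₁ f ≤ (1/(2*ρ₁)) * ∫ x, G x ∂μ₁ := by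
        have := h1 f hf hlip hfint₁
        rwa [hgoal₁] at this
      have step1 : Ent μ₂ f ≤ c₂ * ((1/(2*ρ₁)) * ∫ x, G x ∂μ₁) :=
        (chain hLint).trans (mul_le_mul_of_nonneg_left e₄ hc₂pos.le)
      have step2 : c₂ * ((1/(2*ρ₁)) * ∫ x, G x ∂μ₁)
          ≤ c₂ * ((1/(2*ρ₁)) * ((1/c₁) * ∫ x, G x ∂μ₂)) := by
        apply mul_le_mul_of_nonneg_left _ hc₂pos.le
        apply mul_le_mul_of_nonneg_left _ (by positivity)
        have heq : (1/c₁) * (∫ x, G x ∂μ₂) - ∫ x, G x ∂μ₁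
            = (1/c₁) * ((∫ x, G x ∂μ₂) - c₁ * ∫ x, G x ∂μ₁) := by field_simp
        have hnn : 0 ≤ (1/c₁) * ((∫ x, G x ∂μ₂) - c₁ * ∫ x, G x ∂μ₁) :=
          mul_nonneg (by positivity) (by linarith)
        linarith [heq ▸ hnn]
      have step3 : c₂ * ((1/(2*ρ₁)) * ((1/c₁) * ∫ x, G x ∂μ₂))
          = 1 / (2 * (ρ₁ * Real.exp (-(Mv - mv)))) * ∫ x, G x ∂μ₂ := by
        rw [← hcc]; ring
      linarith
    · -- L not integrable but Fisher info finite : contradiction via scaling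
      exfalso
      set A : ℝ := (1/(2*ρ₁)) * ∫ x, G x ∂μ₁ with hA
      have hAnn : 0 ≤ A := mul_nonneg (by positivity) hI₁nn
      set E : ℝ := Real.exp (-A/t₁ - 1) with hE
      have hEpos : 0 < E := Real.exp_pos _
      set c : ℝ := E / t₁ with hc
      have hcpos : 0 < c := div_pos hEpos ht₁pos
      have h₁ := hscale c hcpos
      rw [hent_scale_non hLint c hcpos] at h₁
      have hct : c * t₁ = E := by rw [hc]; field_simp
      rw [hct, hE, Real.log_exp, ← hE] at h₁
      have hrhs : (1/(2*ρ₁)) * (c * ∫ x, G x ∂μ₁) = E * A / t₁ := by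
        rw [hA, hc]; field_simp
      rw [hrhs] at h₁
      have hlhs : -(E * (-A/t₁ - 1)) = E * A / t₁ + E := by field_simp; ring
      rw [hlhs] at h₁
      linarith
  · -- Fisher information infinite (non-integrable) : RHS is 0
    have hGint₂ : ¬ Integrable G μ₂ := fun h => hGint ((keyInt G hGmeas).mp h)
    have hI₂ : ∫ x, G x ∂μ₂ = 0 := integral_undef hGint₂
    have hI₁ : ∫ x, G x ∂μ₁ = 0 := integral_undef hGint
    rw [hI₂, mul_zero]
    by_cases hLint : Integrable L μ₁
    · have e₄ : Ent μ₁ f ≤ 0 := by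
        have := h1 f hf hlip hfint₁
        rwa [hgoal₁, hI₁, mul_zero] at this
      calc Ent μ₂ f ≤ c₂ * Ent μ₁ f := chain hLint
        _ ≤ 0 := mul_nonpos_of_nonneg_of_nonpos hc₂pos.le e₄
    · exfalso
      have hcpos : (0:ℝ) < 1/(2*t₁) := by positivity
      have h₁ := hscale (1/(2*t₁)) hcpos
      rw [hent_scale_non hLint _ hcpos, hI₁, mul_zero, mul_zero] at h₁
      have hhalf : (1/(2*t₁)) * t₁ = 1/2 := by field_simp
      rw [hhalf] at h₁
      have hlog : Real.log (1/2 : ℝ) < 0 := by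
        rw [show (1/2 : ℝ) = 2⁻¹ by norm_num, Real.log_inv]
        have : (0:ℝ) < Real.log 2 := Real.log_pos (by norm_num)
        linarith
      nlinarith
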